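/- If ρ is a semi-ultrametric on ℕ (i.e., a pseudometric satisfying the strong triangle inequality max{ρ(x,y),ρ(y,z)} ≥ ρ(x,z)), and one defines v(i) = (1/2)·inf_{j≠i} ρ(i,j) and r(i,j) = (ρ(i,j) − v(i) − v(j))·1_{i≠j}, then r is a pseudometric on ℕ (nonnegative, symmetric, zero on the diagonal, and satisfying the triangle inequality). -/
import Mathlib


/-- The external branch length vector: `Υ(ρ)(i) = (1/2) inf_{j ≠ i} ρ(i,j)`. -/
noncomputable def extBranch (ρ : ℕ → ℕ → ℝ) (i : ℕ) : ℝ :=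
  (1 / 2) * ⨅ j : {j : ℕ // j ≠ i}, ρ i (j : ℕ)

lemma extBranch_nonneg (ρ : ℕ → ℕ → ℝ) (hnonneg : ∀ i j, 0 ≤ ρ i j) (i : ℕ) :
    0 ≤ extBranch ρ i := by
  unfold extBranch
  have : (0:ℝ) ≤ ⨅ j : {j : ℕ // j ≠ i}, ρ i (j : ℕ) :=
    Real.iInf_nonneg (fun j => hnonneg i j)
  linarith

lemma two_extBranch_le (ρ : ℕ → ℕ → ℝ) (hnonneg : ∀ i j, 0 ≤ ρ i j) {i j : ℕ}
    (h : j ≠ i) : 2 * extBranch ρ i ≤ ρ i j := by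
  have hb : BddBelow (Set.range fun j : {j : ℕ // j ≠ i} => ρ i (j : ℕ)) :=
    ⟨0, by rintro x ⟨k, rfl⟩; exact hnonneg i k⟩
  have := ciInf_le hb (⟨j, h⟩ : {j : ℕ // j ≠ i})
  unfold extBranch
  linarith

/-- If `ρ` is a semi-ultrametric on `ℕ`, and `v(i) = (1/2) inf_{j≠i} ρ(i,j)`,
`r(i,j) = (ρ(i,j) − v(i) − v(j))·1_{i≠j}`, then `r` is a pseudometric. -/
theorem stmt0 (ρ : ℕ → ℕ → ℝ)
    (hdiag : ∀ i, ρ i i = 0)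
    (hnonneg : ∀ i j, 0 ≤ ρ i j)
    (hsymm : ∀ i j, ρ i j = ρ j i)
    (hultra : ∀ i j k, ρ i j ≤ max (ρ i k) (ρ k j)) :
    ∀ r : ℕ → ℕ → ℝ,
      (r = fun i j => if i = j then 0 else ρ i j - extBranch ρ i - extBranch ρ j) →
      (∀ i j, 0 ≤ r i j) ∧ (∀ i j, r i j = r j i) ∧ (∀ i, r i i = 0) ∧
        (∀ i j k, r i k ≤ r i j + r j k) := by
  intro r hr
  subst hr
  have hv0 := extBranch_nonneg ρ hnonneg
  have hle : ∀ {i j : ℕ}, i ≠ j → 2 * extBranch ρ i ≤ ρ i j := by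
    intro i j h
    exact two_extBranch_le ρ hnonneg h.symm
  have hpos : ∀ i j, 0 ≤ (fun i j => if i = j then 0 else ρ i j - extBranch ρ i - extBranch ρ j) i j := by
    intro i j
    simp only
    split
    · exact le_refl 0
    · rename_i h
      have h1 := hle h
      have h2 := hle (Ne.symm h)
      rw [hsymm j i] at h2
      linarith
  refine ⟨hpos, ?_, ?_, ?_⟩
  · intro i j
    simp only
    by_cases h : i = j
    · subst h; simp
    · rw [if_neg h, if_neg (Ne.symm h), hsymm]
      ring
  · intro i; simp
  · intro i j k
    simp only
    by_cases hij : i = j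
    · subst hij
      by_cases hik : i = k
      · subst hik; simp
      · rw [if_neg hik, if_pos rfl]; linarith
    · by_cases hjk : j = k
      · subst hjk
        rw [if_pos rfl]
        by_cases hik : i = j
        · exact absurd hik hij
        · rw [if_neg hik]; linarith
      · rw [if_neg hij, if_neg hjk]
        by_cases hik : i = k
        · rw [if_pos hik]
          have h1 := hle hij
          have h2 := hle (Ne.symm hij)
          rw [hsymm j i] at h2
          have h3 := hle hjk
          have h4 := hle (Ne.symm hjk)
          rw [hsymm k j] at h4
          linarith
        · rw [if_neg hik]
          have hu := hultra i k j
          have hj1 := hle (Ne.symm hij)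
          have hj2 := hle hjk
          rw [hsymm j i] at hj1
          rcases max_cases (ρ i j) (ρ j k) with ⟨hm, _⟩ | ⟨hm, _⟩ <;>
            rw [hm] at hu <;> linarith
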